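/- Let E ∈ ℝ^{n×n} be symmetric, F ∈ ℝ^{m×n}, G ∈ ℝ^{m×m}, q ∈ ℝⁿ, r ∈ ℝᵐ, and let û ∈ ℝⁿ, p̂ ∈ ℝᵐ. Fix positive weights α₁, α₂, α₃, β₁, β₂. Set Q = q − Eû − Fᵀp̂, R = r − Fû − Gp̂, N₁ = J_S^n Φ_E D_{S,n}⁻¹. Define X₁^R = [α₁⁻¹(ûᵀ⊗Iₙ)N₁, α₂⁻¹(Iₙ⊗p̂ᵀ)Σ_F, 0_{n×m²}], X₂^R = [0_{m×n(n+1)/2}, α₂⁻¹(ûᵀ⊗I_m)Σ_F, α₃⁻¹(p̂ᵀ⊗I_m)Σ_G], Ĩ₁ = [−β₁⁻¹Iₙ, 0_{n×m}], Ĩ₂ = [0_{m×n}, −β₂⁻¹I_m], and M = [[X₁^R, Ĩ₁],[X₂^R, Ĩ₂]]. Then MMᵀ is invertible, and the sparsity-preserving structured backward error inf{ ζ^{σ₁}(ΔE⊙Θ_E, ΔF⊙Θ_F, ΔG⊙Θ_G, Δq, Δr) : ΔE ∈ ℝ^{n×n} symmetric, ΔF ∈ ℝ^{m×n}, ΔG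 ∈ ℝ^{m×m}, Δq ∈ ℝⁿ, Δr ∈ ℝᵐ, (E+ΔE⊙Θ_E)û + (F+ΔF⊙Θ_F)ᵀp̂ = q+Δq and (F+ΔF⊙Θ_F)û + (G+ΔG⊙Θ_G)p̂ = r+Δr } is attained and equals ‖Mᵀ(MMᵀ)⁻¹[Q; R]‖₂. -/

import Mathlib

open Matrix

noncomputable section

namespace GSPPBE

/-- Entrywise real part of a complex matrix. -/
def reM {I J : Type*} (A : Matrix I J ℂ) : Matrix I J ℝ := A.map Complex.re

/-- Entrywise imaginary part of a complex matrix. -/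
def imM {I J : Type*} (A : Matrix I J ℂ) : Matrix I J ℝ := A.map Complex.im

/-- Entrywise real part of a complex vector. -/
def reV {I : Type*} (v : I → ℂ) : I → ℝ := fun i => (v i).re

/-- Entrywise imaginary part of a complex vector. -/
def imV {I : Type*} (v : I → ℂ) : I → ℝ := fun i => (v i).im

/-- Frobenius norm of a matrix. -/
def frob {I J α : Type*} [Fintype I] [Fintype J] [SeminormedAddGroup α]
    (A : Matrix I J α) : ℝ :=
  Real.sqrt (∑ i, ∑ j, ‖A i j‖ ^ 2)

/-- Euclidean norm of a (finitely indexed) vector. -/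
def eunorm {I α : Type*} [Fintype I] [SeminormedAddGroup α] (v : I → α) : ℝ :=
  Real.sqrt (∑ i, ‖v i‖ ^ 2)

/-- Column-major vectorization: `vecM A (j, i) = A i j`. -/
def vecM {I J α : Type*} (A : Matrix I J α) : J × I → α := fun p => A p.2 p.1

/-- Index type for the lower triangle including the diagonal (positions of `vec_S`);
it has `m(m+1)/2` elements. -/
abbrev SymIdx (m : ℕ) := {p : Fin m × Fin m // p.2 ≤ p.1}

/-- Index type for the strictly lower triangle (positions of `vec_SK`);
it has `m(m-1)/2` elements. -/
abbrev SkewIdx (m : ℕ) := {p : Fin m × Fin m // p.2 < p.1}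

/-- `vec_S` of a (symmetric) matrix: its lower-triangular entries `Z i j`, `j ≤ i`. -/
def vecS {m : ℕ} {α : Type*} (Z : Matrix (Fin m) (Fin m) α) : SymIdx m → α :=
  fun p => Z p.1.1 p.1.2

/-- `vec_SK` of a (skew-symmetric) matrix: its strictly lower-triangular entries `Z i j`, `j < i`. -/
def vecSK {m : ℕ} {α : Type*} (Z : Matrix (Fin m) (Fin m) α) : SkewIdx m → α :=
  fun p => Z p.1.1 p.1.2

/-- `J_S^m`: its column at position `(i,j)`, `j ≤ i`, is `vec(eᵢeⱼᵀ + eⱼeᵢᵀ)` for `i > j` and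
`vec(eⱼeⱼᵀ)` for `i = j`.  Rows are vec positions `(column, row)`. -/
def JS (m : ℕ) : Matrix (Fin m × Fin m) (SymIdx m) ℝ :=
  Matrix.of fun cr p =>
    (if cr.2 = p.1.1 ∧ cr.1 = p.1.2 then (1 : ℝ) else 0) +
    (if p.1.1 ≠ p.1.2 ∧ cr.2 = p.1.2 ∧ cr.1 = p.1.1 then 1 else 0)

/-- `J_SK^m`: its column at position `(i,j)`, `j < i`, is `vec(eᵢeⱼᵀ − eⱼeᵢᵀ)`. -/
def JSK (m : ℕ) : Matrix (Fin m × Fin m) (SkewIdx m) ℝ :=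
  Matrix.of fun cr p =>
    (if cr.2 = p.1.1 ∧ cr.1 = p.1.2 then (1 : ℝ) else 0) -
    (if cr.2 = p.1.2 ∧ cr.1 = p.1.1 then 1 else 0)

open Classical in
/-- Sign pattern `Θ_X` of a matrix, with values in the same ring. -/
def theta {I J α : Type*} [Zero α] [One α] (X : Matrix I J α) : Matrix I J α :=
  Matrix.of fun i j => if X i j = 0 then 0 else 1

open Classical in
/-- Real-valued sign pattern `Θ_X` of a matrix. -/
def thetaR {I J α : Type*} [Zero α] (X : Matrix I J α) : Matrix I J ℝ :=
  Matrix.of fun i j => if X i j = 0 then 0 else 1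

/-- `Φ_X = diag(vec_S(Θ_X))`. -/
def Phi {m : ℕ} {α : Type*} [Zero α] (X : Matrix (Fin m) (Fin m) α) :
    Matrix (SymIdx m) (SymIdx m) ℝ :=
  Matrix.diagonal (vecS (thetaR X))

/-- `Ψ_X`: diagonal matrix listing the strictly lower-triangular entries of `Θ_X`
in `vec_SK` ordering. -/
def Psi {m : ℕ} {α : Type*} [Zero α] (X : Matrix (Fin m) (Fin m) α) :
    Matrix (SkewIdx m) (SkewIdx m) ℝ :=
  Matrix.diagonal (vecSK (thetaR X))

/-- `Σ_X = diag(vec(Θ_X))`. -/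
def Sig {I J α : Type*} [DecidableEq I] [DecidableEq J] [Zero α]
    (X : Matrix I J α) : Matrix (J × I) (J × I) ℝ :=
  Matrix.diagonal (vecM (thetaR X))

/-- `D_{S,m}`: diagonal entry `1` at the positions of diagonal entries `(j,j)`, `√2` elsewhere. -/
def DS (m : ℕ) : Matrix (SymIdx m) (SymIdx m) ℝ :=
  Matrix.diagonal fun p => if p.1.1 = p.1.2 then 1 else Real.sqrt 2

/-- `D_{SK,m} = √2·I`. -/
def DSK (m : ℕ) : Matrix (SkewIdx m) (SkewIdx m) ℝ :=
  Matrix.diagonal fun _ => Real.sqrt 2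

/-- `uᵀ ⊗ I_b`, viewed as a matrix acting on column-major vectorizations of `b×a` matrices. -/
def rowKronId {a b : ℕ} (u : Fin a → ℝ) : Matrix (Fin b) (Fin a × Fin b) ℝ :=
  Matrix.of fun r p => u p.1 * (if r = p.2 then 1 else 0)

/-- `I_a ⊗ vᵀ`, viewed as a matrix acting on column-major vectorizations of `b×a` matrices. -/
def idKronRow {a b : ℕ} (v : Fin b → ℝ) : Matrix (Fin a) (Fin a × Fin b) ℝ :=
  Matrix.of fun r p => (if r = p.1 then 1 else 0) * v p.2

/-- The weighted norm `ζ^{σ₁}(A,B,C,q,r)`. -/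
def zeta1 {n m : ℕ} {α : Type*} [SeminormedAddGroup α]
    (α₁ α₂ α₃ β₁ β₂ : ℝ)
    (A : Matrix (Fin n) (Fin n) α) (B : Matrix (Fin m) (Fin n) α)
    (C : Matrix (Fin m) (Fin m) α) (q : Fin n → α) (r : Fin m → α) : ℝ :=
  Real.sqrt (α₁ ^ 2 * frob A ^ 2 + α₂ ^ 2 * frob B ^ 2 + α₃ ^ 2 * frob C ^ 2 +
    β₁ ^ 2 * eunorm q ^ 2 + β₂ ^ 2 * eunorm r ^ 2)

/-- The weighted norm `ζ^{σ₂}(A,B,H,C,q,r)`. -/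
def zeta2 {n m : ℕ} {α : Type*} [SeminormedAddGroup α]
    (α₁ α₂ α₃ α₄ β₁ β₂ : ℝ)
    (A : Matrix (Fin n) (Fin n) α) (B : Matrix (Fin m) (Fin n) α)
    (H : Matrix (Fin m) (Fin n) α) (C : Matrix (Fin m) (Fin m) α)
    (q : Fin n → α) (r : Fin m → α) : ℝ :=
  Real.sqrt (α₁ ^ 2 * frob A ^ 2 + α₂ ^ 2 * frob B ^ 2 + α₃ ^ 2 * frob H ^ 2 +
    α₄ ^ 2 * frob C ^ 2 + β₁ ^ 2 * eunorm q ^ 2 + β₂ ^ 2 * eunorm r ^ 2)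


/-! ### Auxiliary lemmas -/

def dwt {n : ℕ} (p : SymIdx n) : ℝ := if p.1.1 = p.1.2 then 1 else Real.sqrt 2

lemma dwt_pos {n : ℕ} (p : SymIdx n) : 0 < dwt p := by
  unfold dwt; split
  · norm_num
  · positivity

lemma dwt_ne_zero {n : ℕ} (p : SymIdx n) : dwt p ≠ 0 := (dwt_pos p).ne'

lemma dwt_sq {n : ℕ} (p : SymIdx n) : dwt p ^ 2 = if p.1.1 = p.1.2 then 1 else 2 := by
  unfold dwt; split
  · norm_num
  · rw [Real.sq_sqrt] <;> norm_num

lemma DS_eq {n : ℕ} : DS n = Matrix.diagonal (dwt (n := n)) := rfl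

lemma DS_inv {n : ℕ} : (DS n)⁻¹ = Matrix.diagonal (fun p => (dwt p)⁻¹) := by
  apply Matrix.inv_eq_right_inv
  rw [DS_eq, Matrix.diagonal_mul_diagonal]
  rw [show ((fun i => dwt i * (dwt i)⁻¹) : SymIdx n → ℝ) = fun _ => (1:ℝ) from
    funext fun p => mul_inv_cancel₀ (dwt_ne_zero p)]
  exact Matrix.diagonal_one

lemma JS_mulVec {n : ℕ} (A : Matrix (Fin n) (Fin n) ℝ) (hA : A.IsSymm) :
    JS n *ᵥ vecS A = vecM A := by
  funext cr
  obtain ⟨c, r⟩ := cr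
  show ∑ p : SymIdx n, JS n (c, r) p * vecS A p = A r c
  rcases le_or_gt c r with h | h
  · rw [Fintype.sum_eq_single (⟨(r, c), h⟩ : SymIdx n)]
    · have e1 : JS n (c, r) ⟨(r, c), h⟩ = 1 := by
        simp only [JS, Matrix.of_apply]
        split_ifs with h1 h2 h2 <;>
          solve
          | norm_num
          | (exfalso
             simp only [Fin.ext_iff, Fin.le_def, Fin.lt_def, ne_eq, not_and, not_le, not_lt,
               true_and, and_true, not_true_eq_false, Subtype.mk.injEq, Prod.mk.injEq] at *
             all_goals omega)
      rw [e1, one_mul]; rfl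
    · rintro ⟨⟨a, b⟩, hab⟩ hp
      replace hab : b ≤ a := hab
      have hne : ¬(a = r ∧ b = c) := by
        intro ⟨h1, h2⟩; exact hp (by subst h1; subst h2; rfl)
      have e0 : JS n (c, r) ⟨(a, b), hab⟩ = 0 := by
        simp only [JS, Matrix.of_apply]
        split_ifs with h1 h2 h2 <;>
          solve
          | norm_num
          | (exfalso
             simp only [Fin.ext_iff, Fin.le_def, Fin.lt_def, ne_eq, not_and, not_le, not_lt,
               true_and, and_true, not_true_eq_false, Subtype.mk.injEq, Prod.mk.injEq] at *
             all_goals omega)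
      rw [e0, zero_mul]
  · rw [Fintype.sum_eq_single (⟨(c, r), h.le⟩ : SymIdx n)]
    · have e1 : JS n (c, r) ⟨(c, r), h.le⟩ = 1 := by
        simp only [JS, Matrix.of_apply]
        split_ifs with h1 h2 h2 <;>
          solve
          | norm_num
          | (exfalso
             simp only [Fin.ext_iff, Fin.le_def, Fin.lt_def, ne_eq, not_and, not_le, not_lt,
               true_and, and_true, not_true_eq_false, Subtype.mk.injEq, Prod.mk.injEq] at *
             all_goals omega)
      rw [e1, one_mul]
      exact (hA.apply r c).symm ▸ rfl
    · rintro ⟨⟨a, b⟩, hab⟩ hp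
      replace hab : b ≤ a := hab
      have hne : ¬(a = c ∧ b = r) := by
        intro ⟨h1, h2⟩; exact hp (by subst h1; subst h2; rfl)
      have e0 : JS n (c, r) ⟨(a, b), hab⟩ = 0 := by
        simp only [JS, Matrix.of_apply]
        split_ifs with h1 h2 h2 <;>
          solve
          | norm_num
          | (exfalso
             simp only [Fin.ext_iff, Fin.le_def, Fin.lt_def, ne_eq, not_and, not_le, not_lt,
               true_and, and_true, not_true_eq_false, Subtype.mk.injEq, Prod.mk.injEq] at *
             all_goals omega)
      rw [e0, zero_mul]

lemma rowKronId_mulVec {a b : ℕ} (u : Fin a → ℝ) (A : Matrix (Fin b) (Fin a) ℝ) :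
    rowKronId u *ᵥ vecM A = A *ᵥ u := by
  funext i
  show ∑ p : Fin a × Fin b, rowKronId u i p * vecM A p = _
  rw [Fintype.sum_prod_type]
  simp only [rowKronId, Matrix.of_apply, vecM, mul_ite, mul_one, mul_zero, ite_mul, zero_mul]
  simp only [Matrix.mulVec, dotProduct]
  rw [Finset.sum_congr rfl (fun c _ => Finset.sum_ite_eq (Finset.univ : Finset (Fin b)) i
    (fun r => u c * A r c))]
  simp [mul_comm]

lemma idKronRow_mulVec {a b : ℕ} (v : Fin b → ℝ) (B : Matrix (Fin b) (Fin a) ℝ) :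
    idKronRow v *ᵥ vecM B = Bᵀ *ᵥ v := by
  funext i
  show ∑ p : Fin a × Fin b, idKronRow v i p * vecM B p = _
  rw [Fintype.sum_prod_type]
  simp only [idKronRow, Matrix.of_apply, vecM, ite_mul, one_mul, zero_mul]
  rw [Finset.sum_comm]
  simp [Finset.sum_ite_eq, Matrix.mulVec, dotProduct, Matrix.transpose_apply, mul_comm]

lemma Phi_mulVec {n : ℕ} (E A : Matrix (Fin n) (Fin n) ℝ)
    (hA : ∀ i j, E i j = 0 → A i j = 0) :
    Phi E *ᵥ vecS A = vecS A := by
  funext p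
  rw [Phi, Matrix.mulVec_diagonal]
  by_cases h : E p.1.1 p.1.2 = 0
  · simp [vecS, thetaR, h, hA _ _ h]
  · simp [vecS, thetaR, h]

lemma Sig_mulVec {a b : ℕ} (F B : Matrix (Fin b) (Fin a) ℝ)
    (hB : ∀ i j, F i j = 0 → B i j = 0) :
    Sig F *ᵥ vecM B = vecM B := by
  funext p
  rw [Sig, Matrix.mulVec_diagonal]
  by_cases h : F p.2 p.1 = 0
  · simp [vecM, thetaR, h, hB _ _ h]
  · simp [vecM, thetaR, h]

lemma DSinv_mulVec {n : ℕ} (x : SymIdx n → ℝ) :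
    (DS n)⁻¹ *ᵥ (fun p => dwt p * x p) = x := by
  funext p
  rw [DS_inv, Matrix.mulVec_diagonal]
  exact inv_mul_cancel_left₀ (dwt_ne_zero p) _


def encode {n m : ℕ} (α₁ α₂ α₃ β₁ β₂ : ℝ) (A : Matrix (Fin n) (Fin n) ℝ)
    (B : Matrix (Fin m) (Fin n) ℝ) (C : Matrix (Fin m) (Fin m) ℝ)
    (dq : Fin n → ℝ) (dr : Fin m → ℝ) :
    (SymIdx n ⊕ ((Fin n × Fin m) ⊕ (Fin m × Fin m))) ⊕ (Fin n ⊕ Fin m) → ℝ :=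
  Sum.elim
    (Sum.elim (α₁ • fun p => dwt p * vecS A p)
      (Sum.elim (α₂ • vecM B) (α₃ • vecM C)))
    (Sum.elim (β₁ • dq) (β₂ • dr))

lemma cs_mul {l m n : Type*} [Fintype m] (A : Matrix l m ℝ) (B : Matrix m n ℝ) :
    @HMul.hMul (Matrix l m ℝ) (Matrix m n ℝ) (Matrix l n ℝ)
      CStarMatrix.instHMulOfFintypeOfMulOfAddCommMonoid A B =
    @HMul.hMul (Matrix l m ℝ) (Matrix m n ℝ) (Matrix l n ℝ)
      Matrix.instHMulOfFintypeOfMulOfAddCommMonoid A B := rfl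

lemma encode_mulVec {n m : ℕ} (E : Matrix (Fin n) (Fin n) ℝ) (F : Matrix (Fin m) (Fin n) ℝ)
    (G : Matrix (Fin m) (Fin m) ℝ) (uh : Fin n → ℝ) (ph : Fin m → ℝ)
    (α₁ α₂ α₃ β₁ β₂ : ℝ) (hα₁ : α₁ ≠ 0) (hα₂ : α₂ ≠ 0) (hα₃ : α₃ ≠ 0)
    (hβ₁ : β₁ ≠ 0) (hβ₂ : β₂ ≠ 0)
    (A : Matrix (Fin n) (Fin n) ℝ) (B : Matrix (Fin m) (Fin n) ℝ)
    (C : Matrix (Fin m) (Fin m) ℝ) (dq : Fin n → ℝ) (dr : Fin m → ℝ)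
    (hAs : A.IsSymm) (hAE : ∀ i j, E i j = 0 → A i j = 0)
    (hBF : ∀ i j, F i j = 0 → B i j = 0) (hCG : ∀ i j, G i j = 0 → C i j = 0) :
    (fromBlocks
        (fromCols (α₁⁻¹ • (rowKronId uh * (JS n * Phi E * (DS n)⁻¹)))
          (fromCols (α₂⁻¹ • (idKronRow ph * Sig F)) 0))
        (fromCols ((-(β₁⁻¹)) • (1 : Matrix (Fin n) (Fin n) ℝ)) 0)
        (fromCols 0
          (fromCols (α₂⁻¹ • (rowKronId uh * Sig F)) (α₃⁻¹ • (rowKronId ph * Sig G))))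
        (fromCols 0 ((-(β₂⁻¹)) • (1 : Matrix (Fin m) (Fin m) ℝ)))) *ᵥ
      encode α₁ α₂ α₃ β₁ β₂ A B C dq dr =
    Sum.elim (A *ᵥ uh + Bᵀ *ᵥ ph - dq) (B *ᵥ uh + C *ᵥ ph - dr) := by
  have hA' : (α₁⁻¹ • (rowKronId uh * (JS n * Phi E * (DS n)⁻¹))) *ᵥ
      (α₁ • fun p => dwt p * vecS A p) = A *ᵥ uh := by
    simp only [cs_mul]
    rw [Matrix.smul_mulVec, Matrix.mulVec_smul, smul_smul, inv_mul_cancel₀ hα₁, one_smul,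
      ← Matrix.mulVec_mulVec, ← Matrix.mulVec_mulVec, DSinv_mulVec,
      ← Matrix.mulVec_mulVec, Phi_mulVec E A hAE, JS_mulVec A hAs, rowKronId_mulVec]
  have hB1 : (α₂⁻¹ • (idKronRow ph * Sig F)) *ᵥ (α₂ • vecM B) = Bᵀ *ᵥ ph := by
    simp only [cs_mul]
    rw [Matrix.smul_mulVec, Matrix.mulVec_smul, smul_smul, inv_mul_cancel₀ hα₂, one_smul,
      ← Matrix.mulVec_mulVec, Sig_mulVec F B hBF, idKronRow_mulVec]
  have hB2 : (α₂⁻¹ • (rowKronId uh * Sig F)) *ᵥ (α₂ • vecM B) = B *ᵥ uh := by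
    simp only [cs_mul]
    rw [Matrix.smul_mulVec, Matrix.mulVec_smul, smul_smul, inv_mul_cancel₀ hα₂, one_smul,
      ← Matrix.mulVec_mulVec, Sig_mulVec F B hBF, rowKronId_mulVec]
  have hC' : (α₃⁻¹ • (rowKronId ph * Sig G)) *ᵥ (α₃ • vecM C) = C *ᵥ ph := by
    simp only [cs_mul]
    rw [Matrix.smul_mulVec, Matrix.mulVec_smul, smul_smul, inv_mul_cancel₀ hα₃, one_smul,
      ← Matrix.mulVec_mulVec, Sig_mulVec G C hCG, rowKronId_mulVec]
  have hq : ((-(β₁⁻¹)) • (1 : Matrix (Fin n) (Fin n) ℝ)) *ᵥ (β₁ • dq) = -dq := by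
    rw [Matrix.smul_mulVec, Matrix.mulVec_smul, Matrix.one_mulVec, smul_smul]
    rw [show -β₁⁻¹ * β₁ = -1 by field_simp]
    simp
  have hr : ((-(β₂⁻¹)) • (1 : Matrix (Fin m) (Fin m) ℝ)) *ᵥ (β₂ • dr) = -dr := by
    rw [Matrix.smul_mulVec, Matrix.mulVec_smul, Matrix.one_mulVec, smul_smul]
    rw [show -β₂⁻¹ * β₂ = -1 by field_simp]
    simp
  rw [encode, fromBlocks_mulVec]
  simp only [Sum.elim_comp_inl, Sum.elim_comp_inr, fromCols_mulVec_sumElim]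
  rw [hA', hB1, hB2, hC', hq, hr]
  simp only [Matrix.zero_mulVec, add_zero, zero_add]
  funext k
  rcases k with i | j <;> simp <;> ring

lemma eunorm_sq {ι : Type*} [Fintype ι] (v : ι → ℝ) : eunorm v ^ 2 = ∑ i, v i ^ 2 := by
  unfold eunorm
  rw [Real.sq_sqrt (by positivity)]
  exact Finset.sum_congr rfl fun i _ => by rw [Real.norm_eq_abs, sq_abs]

lemma frob_sq {I J : Type*} [Fintype I] [Fintype J] (M : Matrix I J ℝ) :
    frob M ^ 2 = ∑ i, ∑ j, M i j ^ 2 := by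
  unfold frob
  rw [Real.sq_sqrt (by positivity)]
  exact Finset.sum_congr rfl fun i _ => Finset.sum_congr rfl fun j _ => by
    rw [Real.norm_eq_abs, sq_abs]

lemma sum_symIdx_sq {n : ℕ} (A : Matrix (Fin n) (Fin n) ℝ) (hA : A.IsSymm) :
    ∑ p : SymIdx n, (dwt p * A p.1.1 p.1.2) ^ 2 = ∑ i, ∑ j, A i j ^ 2 := by
  classical
  have h1 : ∑ p : SymIdx n, (dwt p * A p.1.1 p.1.2) ^ 2 =
      ∑ x ∈ Finset.univ.filter (fun x : Fin n × Fin n => x.2 ≤ x.1),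
        ((if x.1 = x.2 then (1:ℝ) else Real.sqrt 2) * A x.1 x.2) ^ 2 := by
    exact (Finset.sum_subtype (p := fun x : Fin n × Fin n => x.2 ≤ x.1)
      (Finset.univ.filter (fun x : Fin n × Fin n => x.2 ≤ x.1)) (by simp)
      (fun x : Fin n × Fin n =>
        ((if x.1 = x.2 then (1:ℝ) else Real.sqrt 2) * A x.1 x.2) ^ 2)).symm
  rw [h1, Finset.sum_filter]
  have h2 : ∑ i, ∑ j, A i j ^ 2 = ∑ x : Fin n × Fin n, A x.1 x.2 ^ 2 := by
    rw [Fintype.sum_prod_type]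
  rw [h2]
  have key : ∀ x : Fin n × Fin n,
      (if x.2 ≤ x.1 then ((if x.1 = x.2 then (1:ℝ) else Real.sqrt 2) * A x.1 x.2) ^ 2 else 0) =
      (if x.2 ≤ x.1 then A x.1 x.2 ^ 2 else 0) + (if x.2 < x.1 then A x.1 x.2 ^ 2 else 0) := by
    intro x
    by_cases hle : x.2 ≤ x.1
    · by_cases heq : x.1 = x.2
      · rw [if_pos hle, if_pos hle, if_pos heq, if_neg (by rw [heq]; exact lt_irrefl _)]
        ring
      · have hlt : x.2 < x.1 := lt_of_le_of_ne hle (fun h => heq h.symm)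
        rw [if_pos hle, if_pos hle, if_pos hlt, if_neg heq, mul_pow,
          Real.sq_sqrt (by norm_num : (0:ℝ) ≤ 2)]
        ring
    · rw [if_neg hle, if_neg hle, if_neg (fun h => hle h.le), add_zero]
  rw [Finset.sum_congr rfl (fun x _ => key x), Finset.sum_add_distrib]
  have h3 : ∑ x : Fin n × Fin n, (if x.2 < x.1 then A x.1 x.2 ^ 2 else 0) =
      ∑ x : Fin n × Fin n, (if x.1 < x.2 then A x.1 x.2 ^ 2 else 0) := by
    apply Fintype.sum_equiv (Equiv.prodComm (Fin n) (Fin n))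
    intro x
    simp only [Equiv.prodComm_apply, Prod.swap]
    by_cases h : x.2 < x.1
    · simp [h, hA.apply x.1 x.2]
    · simp [h]
  rw [h3, ← Finset.sum_add_distrib]
  apply Finset.sum_congr rfl
  intro x _
  by_cases h : x.2 ≤ x.1
  · rw [if_pos h, if_neg (not_lt.mpr h), add_zero]
  · rw [if_neg h, if_pos (not_le.mp h), zero_add]

lemma encode_eunorm {n m : ℕ} (α₁ α₂ α₃ β₁ β₂ : ℝ)
    (hα₁ : 0 < α₁) (hα₂ : 0 < α₂) (hα₃ : 0 < α₃) (hβ₁ : 0 < β₁) (hβ₂ : 0 < β₂)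
    (A : Matrix (Fin n) (Fin n) ℝ) (B : Matrix (Fin m) (Fin n) ℝ)
    (C : Matrix (Fin m) (Fin m) ℝ) (dq : Fin n → ℝ) (dr : Fin m → ℝ)
    (hAs : A.IsSymm) :
    eunorm (encode α₁ α₂ α₃ β₁ β₂ A B C dq dr) = zeta1 α₁ α₂ α₃ β₁ β₂ A B C dq dr := by
  unfold eunorm zeta1
  congr 1
  have hnorm : ∀ x : ℝ, ‖x‖ ^ 2 = x ^ 2 := fun x => by rw [Real.norm_eq_abs, sq_abs]
  simp only [hnorm, frob_sq, eunorm_sq]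
  simp only [encode]
  simp only [Fintype.sum_sum_type, Sum.elim_inl, Sum.elim_inr, Pi.smul_apply, smul_eq_mul]
  have e1 : ∑ p : SymIdx n, (α₁ * (dwt p * vecS A p)) ^ 2 =
      α₁ ^ 2 * ∑ i, ∑ j, A i j ^ 2 := by
    rw [← sum_symIdx_sq A hAs, Finset.mul_sum]
    exact Finset.sum_congr rfl fun p _ => by unfold vecS; ring
  have e2 : ∑ pq : Fin n × Fin m, (α₂ * vecM B pq) ^ 2 = α₂ ^ 2 * ∑ i, ∑ j, B i j ^ 2 := by
    rw [Fintype.sum_prod_type, Finset.mul_sum]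
    rw [Finset.sum_comm]
    exact Finset.sum_congr rfl fun i _ => by
      rw [Finset.mul_sum]; exact Finset.sum_congr rfl fun j _ => by unfold vecM; ring
  have e3 : ∑ pq : Fin m × Fin m, (α₃ * vecM C pq) ^ 2 = α₃ ^ 2 * ∑ i, ∑ j, C i j ^ 2 := by
    rw [Fintype.sum_prod_type, Finset.mul_sum]
    rw [Finset.sum_comm]
    exact Finset.sum_congr rfl fun i _ => by
      rw [Finset.mul_sum]; exact Finset.sum_congr rfl fun j _ => by unfold vecM; ring
  have e4 : ∑ i, (β₁ * dq i) ^ 2 = β₁ ^ 2 * ∑ i, dq i ^ 2 := by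
    rw [Finset.mul_sum]; exact Finset.sum_congr rfl fun i _ => by ring
  have e5 : ∑ i, (β₂ * dr i) ^ 2 = β₂ ^ 2 * ∑ i, dr i ^ 2 := by
    rw [Finset.mul_sum]; exact Finset.sum_congr rfl fun i _ => by ring
  rw [e1, e2, e3, e4, e5]
  ring

lemma least_squares {κ ι : Type*} [Fintype κ] [Fintype ι] [DecidableEq κ]
    (M : Matrix κ ι ℝ) (hU : IsUnit (M * Mᵀ)) (w : κ → ℝ) (z : ι → ℝ)
    (hz : M *ᵥ z = w) :
    eunorm ((Mᵀ * (M * Mᵀ)⁻¹) *ᵥ w) ≤ eunorm z := by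
  have hdet : IsUnit (M * Mᵀ).det := (Matrix.isUnit_iff_isUnit_det _).mp hU
  set y := (M * Mᵀ)⁻¹ *ᵥ w with hy
  have hzs : (Mᵀ * (M * Mᵀ)⁻¹) *ᵥ w = Mᵀ *ᵥ y := by rw [hy, Matrix.mulVec_mulVec]
  rw [hzs]
  set zs := Mᵀ *ᵥ y with hzsdef
  have hMzs : M *ᵥ zs = w := by
    rw [hzsdef, Matrix.mulVec_mulVec, hy, Matrix.mulVec_mulVec,
      Matrix.mul_nonsing_inv _ hdet, Matrix.one_mulVec]
  have hdot : ∀ v : ι → ℝ, M *ᵥ v = w → zs ⬝ᵥ v = y ⬝ᵥ w := by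
    intro v hv
    rw [hzsdef, Matrix.mulVec_transpose, ← Matrix.dotProduct_mulVec, hv]
  have key : zs ⬝ᵥ z = zs ⬝ᵥ zs := by rw [hdot z hz, hdot zs hMzs]
  have hnn : (0:ℝ) ≤ zs ⬝ᵥ zs := Finset.sum_nonneg fun i _ => mul_self_nonneg _
  have hcs : (zs ⬝ᵥ z) ^ 2 ≤ (zs ⬝ᵥ zs) * (z ⬝ᵥ z) := by
    have := Finset.sum_mul_sq_le_sq_mul_sq Finset.univ zs z
    calc (zs ⬝ᵥ z) ^ 2 = (∑ i, zs i * z i) ^ 2 := rfl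
      _ ≤ (∑ i, zs i ^ 2) * (∑ i, z i ^ 2) := this
      _ = (zs ⬝ᵥ zs) * (z ⬝ᵥ z) := by
          unfold dotProduct
          congr 1 <;> exact Finset.sum_congr rfl fun i _ => by ring
  have hmain : zs ⬝ᵥ zs ≤ z ⬝ᵥ z := by
    rcases eq_or_lt_of_le hnn with h0 | hpos
    · rw [← h0]; exact Finset.sum_nonneg fun i _ => mul_self_nonneg _
    · have : (zs ⬝ᵥ zs) * (zs ⬝ᵥ zs) ≤ (zs ⬝ᵥ zs) * (z ⬝ᵥ z) := by
        calc (zs ⬝ᵥ zs) * (zs ⬝ᵥ zs) = (zs ⬝ᵥ z) ^ 2 := by rw [key]; ring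
          _ ≤ (zs ⬝ᵥ zs) * (z ⬝ᵥ z) := hcs
      exact le_of_mul_le_mul_left this hpos
  have hsq : ∀ v : ι → ℝ, eunorm v = Real.sqrt (v ⬝ᵥ v) := by
    intro v
    unfold eunorm dotProduct
    congr 1
    exact Finset.sum_congr rfl fun i _ => by rw [Real.norm_eq_abs, sq_abs]; ring
  rw [hsq, hsq]
  exact Real.sqrt_le_sqrt hmain


lemma N1_col {n : ℕ} (E : Matrix (Fin n) (Fin n) ℝ) (p : SymIdx n)
    (hp : E p.1.1 p.1.2 = 0) (cr : Fin n × Fin n) :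
    (JS n * Phi E * (DS n)⁻¹) cr p = 0 := by
  rw [DS_inv, Matrix.mul_diagonal, Phi, Matrix.mul_diagonal]
  simp [vecS, thetaR, hp]

lemma Sig_col {a b : ℕ} (F : Matrix (Fin b) (Fin a) ℝ) (A : Matrix (Fin c) (Fin a × Fin b) ℝ)
    (pq : Fin a × Fin b) (hp : F pq.2 pq.1 = 0) (i : Fin c) :
    (A * Sig F) i pq = 0 := by
  rw [Sig, Matrix.mul_diagonal]
  simp [vecM, thetaR, hp]

lemma transpose_mulVec_zero {κ ι : Type*} [Fintype κ] (M : Matrix κ ι ℝ) (idx : ι)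
    (h : ∀ k, M k idx = 0) (y : κ → ℝ) : (Mᵀ *ᵥ y) idx = 0 := by
  simp [Matrix.mulVec, dotProduct, Matrix.transpose_apply, h]

def sortIdx {n : ℕ} (i j : Fin n) : SymIdx n :=
  if h : j ≤ i then ⟨(i, j), h⟩ else ⟨(j, i), (not_le.mp h).le⟩

lemma sortIdx_symm {n : ℕ} (i j : Fin n) : sortIdx i j = sortIdx j i := by
  unfold sortIdx
  split_ifs with h1 h2 h2
  · have : i = j := le_antisymm h2 h1
    subst this; rfl
  · rfl
  · rfl
  · exact absurd (not_le.mp h1).le h2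

lemma sortIdx_self {n : ℕ} (p : SymIdx n) : sortIdx p.1.1 p.1.2 = p := by
  unfold sortIdx
  rw [dif_pos p.2]

/-- Corollary 3.5: sparsity-preserving structured backward error for the real
GSPP with `E` symmetric, general `F`, `G`, and `H = F`. -/
theorem structured_BE_real_case_a
    (n m : ℕ) (E : Matrix (Fin n) (Fin n) ℝ) (hE : E.IsSymm)
    (F : Matrix (Fin m) (Fin n) ℝ) (G : Matrix (Fin m) (Fin m) ℝ)
    (q : Fin n → ℝ) (r : Fin m → ℝ) (uh : Fin n → ℝ) (ph : Fin m → ℝ)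
    (α₁ α₂ α₃ β₁ β₂ : ℝ)
    (hα₁ : 0 < α₁) (hα₂ : 0 < α₂) (hα₃ : 0 < α₃) (hβ₁ : 0 < β₁) (hβ₂ : 0 < β₂) :
    let Q : Fin n → ℝ := q - E *ᵥ uh - Fᵀ *ᵥ ph
    let R : Fin m → ℝ := r - F *ᵥ uh - G *ᵥ ph
    let N₁ := JS n * Phi E * (DS n)⁻¹
    let X₁ : Matrix (Fin n) (SymIdx n ⊕ ((Fin n × Fin m) ⊕ (Fin m × Fin m))) ℝ :=
      fromCols (α₁⁻¹ • (rowKronId uh * N₁))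
        (fromCols (α₂⁻¹ • (idKronRow ph * Sig F)) 0)
    let X₂ : Matrix (Fin m) (SymIdx n ⊕ ((Fin n × Fin m) ⊕ (Fin m × Fin m))) ℝ :=
      fromCols 0
        (fromCols (α₂⁻¹ • (rowKronId uh * Sig F)) (α₃⁻¹ • (rowKronId ph * Sig G)))
    let I₁ : Matrix (Fin n) (Fin n ⊕ Fin m) ℝ :=
      fromCols ((-(β₁⁻¹)) • (1 : Matrix (Fin n) (Fin n) ℝ)) 0
    let I₂ : Matrix (Fin m) (Fin n ⊕ Fin m) ℝ :=
      fromCols 0 ((-(β₂⁻¹)) • (1 : Matrix (Fin m) (Fin m) ℝ))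
    let M := fromBlocks X₁ I₁ X₂ I₂
    let w : Fin n ⊕ Fin m → ℝ := Sum.elim Q R
    IsUnit (M * Mᵀ) ∧
      IsLeast
        {t : ℝ | ∃ (ΔE : Matrix (Fin n) (Fin n) ℝ) (ΔF : Matrix (Fin m) (Fin n) ℝ)
            (ΔG : Matrix (Fin m) (Fin m) ℝ) (Δq : Fin n → ℝ) (Δr : Fin m → ℝ),
            ΔE.IsSymm ∧
            (E + ΔE.hadamard (theta E)) *ᵥ uh + (F + ΔF.hadamard (theta F))ᵀ *ᵥ ph = q + Δq ∧
            (F + ΔF.hadamard (theta F)) *ᵥ uh + (G + ΔG.hadamard (theta G)) *ᵥ ph = r + Δr ∧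
            t = zeta1 α₁ α₂ α₃ β₁ β₂ (ΔE.hadamard (theta E)) (ΔF.hadamard (theta F))
                  (ΔG.hadamard (theta G)) Δq Δr}
        (eunorm ((Mᵀ * (M * Mᵀ)⁻¹) *ᵥ w)) := by
  intro Q R N₁ X₁ X₂ I₁ I₂ M w
  have hQdef : Q = q - E *ᵥ uh - Fᵀ *ᵥ ph := rfl
  have hRdef : R = r - F *ᵥ uh - G *ᵥ ph := rfl
  have hN₁def : N₁ = JS n * Phi E * (DS n)⁻¹ := rfl
  have hX₁def : X₁ = fromCols (α₁⁻¹ • (rowKronId uh * N₁))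
      (fromCols (α₂⁻¹ • (idKronRow ph * Sig F)) 0) := rfl
  have hX₂def : X₂ = fromCols 0
      (fromCols (α₂⁻¹ • (rowKronId uh * Sig F)) (α₃⁻¹ • (rowKronId ph * Sig G))) := rfl
  have hI₁def : I₁ = fromCols ((-(β₁⁻¹)) • (1 : Matrix (Fin n) (Fin n) ℝ)) 0 := rfl
  have hI₂def : I₂ = fromCols 0 ((-(β₂⁻¹)) • (1 : Matrix (Fin m) (Fin m) ℝ)) := rfl
  have hMdef : M = fromBlocks X₁ I₁ X₂ I₂ := rfl
  have hwdef : w = Sum.elim Q R := rfl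
  have hMexp : M = fromBlocks
      (fromCols (α₁⁻¹ • (rowKronId uh * (JS n * Phi E * (DS n)⁻¹)))
        (fromCols (α₂⁻¹ • (idKronRow ph * Sig F)) 0))
      (fromCols ((-(β₁⁻¹)) • (1 : Matrix (Fin n) (Fin n) ℝ)) 0)
      (fromCols 0
        (fromCols (α₂⁻¹ • (rowKronId uh * Sig F)) (α₃⁻¹ • (rowKronId ph * Sig G))))
      (fromCols 0 ((-(β₂⁻¹)) • (1 : Matrix (Fin m) (Fin m) ℝ))) := rfl
  simp only [cs_mul] at hMexp
  -- transposed mulVec entries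
  have hMT : ∀ (v : Fin n ⊕ Fin m → ℝ) idx, (Mᵀ *ᵥ v) idx = ∑ k, M k idx * v k := by
    intro v idx
    simp [Matrix.mulVec, dotProduct]
  -- Part 1 : invertibility
  have hMMT : IsUnit (M * Mᵀ) := by
    rw [Matrix.isUnit_iff_isUnit_det, isUnit_iff_ne_zero]
    intro hdet
    obtain ⟨v, hv0, hv⟩ := Matrix.exists_mulVec_eq_zero_iff.mpr hdet
    have h1 : (Mᵀ *ᵥ v) ⬝ᵥ (Mᵀ *ᵥ v) = 0 := by
      nth_rewrite 1 [Matrix.mulVec_transpose]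
      rw [← Matrix.dotProduct_mulVec, Matrix.mulVec_mulVec, hv, dotProduct_zero]
    have h1' : ∑ k, (Mᵀ *ᵥ v) k * (Mᵀ *ᵥ v) k = 0 := h1
    have h2 : ∀ k, (Mᵀ *ᵥ v) k = 0 := by
      intro k
      have := (Finset.sum_eq_zero_iff_of_nonneg
        (fun i _ => mul_self_nonneg ((Mᵀ *ᵥ v) i))).mp h1' k (Finset.mem_univ k)
      exact mul_self_eq_zero.mp this
    apply hv0
    funext k
    rcases k with i | j
    · have h3 := h2 (Sum.inr (Sum.inl i))
      rw [hMT, hMexp] at h3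
      simp only [Fintype.sum_sum_type, Matrix.fromBlocks_apply₁₂, Matrix.fromBlocks_apply₂₂,
        Matrix.fromCols_apply_inl, Matrix.smul_apply, Matrix.one_apply, smul_eq_mul,
        Matrix.zero_apply, zero_mul, Finset.sum_const_zero, add_zero, mul_ite, mul_one,
        mul_zero, ite_mul, zero_mul] at h3
      rw [Finset.sum_ite_eq' Finset.univ i (fun i' => -β₁⁻¹ * v (Sum.inl i'))] at h3
      simp only [Finset.mem_univ, if_pos] at h3
      have : v (Sum.inl i) = 0 := by
        by_contra hvi
        exact hvi (by
          have hb : (β₁:ℝ)⁻¹ ≠ 0 := inv_ne_zero hβ₁.ne'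
          field_simp at h3
          simpa using h3)
      simpa using this
    · have h3 := h2 (Sum.inr (Sum.inr j))
      rw [hMT, hMexp] at h3
      simp only [Fintype.sum_sum_type, Matrix.fromBlocks_apply₁₂, Matrix.fromBlocks_apply₂₂,
        Matrix.fromCols_apply_inr, Matrix.smul_apply, Matrix.one_apply, smul_eq_mul,
        Matrix.zero_apply, zero_mul, Finset.sum_const_zero, zero_add, mul_ite, mul_one,
        mul_zero, ite_mul, zero_mul] at h3
      rw [Finset.sum_ite_eq' Finset.univ j (fun j' => -β₂⁻¹ * v (Sum.inr j'))] at h3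
      simp only [Finset.mem_univ, if_pos] at h3
      have : v (Sum.inr j) = 0 := by
        by_contra hvj
        exact hvj (by
          field_simp at h3
          simpa using h3)
      simpa using this
  refine ⟨hMMT, ?_, ?_⟩
  -- Membership : the infimum is attained
  · set zs : (SymIdx n ⊕ ((Fin n × Fin m) ⊕ (Fin m × Fin m))) ⊕ (Fin n ⊕ Fin m) → ℝ :=
      (Mᵀ * (M * Mᵀ)⁻¹) *ᵥ w with hzsdef
    have hzs2 : zs = Mᵀ *ᵥ ((M * Mᵀ)⁻¹ *ᵥ w) := by rw [hzsdef, Matrix.mulVec_mulVec]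
    -- pattern vanishing
    have f1 : ∀ p : SymIdx n, E p.1.1 p.1.2 = 0 → zs (Sum.inl (Sum.inl p)) = 0 := by
      intro p hp
      rw [hzs2]
      apply transpose_mulVec_zero
      intro k
      rcases k with i | j
      · rw [hMexp]
        rw [Matrix.fromBlocks_apply₁₁, Matrix.fromCols_apply_inl, Matrix.smul_apply]
        rw [Matrix.mul_apply]
        simp [N1_col E p hp]
      · rw [hMexp]
        rw [Matrix.fromBlocks_apply₂₁, Matrix.fromCols_apply_inl]
        simp
    have f2 : ∀ pq : Fin n × Fin m, F pq.2 pq.1 = 0 →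
        zs (Sum.inl (Sum.inr (Sum.inl pq))) = 0 := by
      intro pq hp
      rw [hzs2]
      apply transpose_mulVec_zero
      intro k
      rcases k with i | j
      · rw [hMexp, Matrix.fromBlocks_apply₁₁, Matrix.fromCols_apply_inr,
          Matrix.fromCols_apply_inl, Matrix.smul_apply, Sig_col F (idKronRow ph) pq hp i]
        simp
      · rw [hMexp, Matrix.fromBlocks_apply₂₁, Matrix.fromCols_apply_inr,
          Matrix.fromCols_apply_inl, Matrix.smul_apply, Sig_col F (rowKronId uh) pq hp j]
        simp
    have f3 : ∀ pq : Fin m × Fin m, G pq.2 pq.1 = 0 →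
        zs (Sum.inl (Sum.inr (Sum.inr pq))) = 0 := by
      intro pq hp
      rw [hzs2]
      apply transpose_mulVec_zero
      intro k
      rcases k with i | j
      · rw [hMexp, Matrix.fromBlocks_apply₁₁, Matrix.fromCols_apply_inr,
          Matrix.fromCols_apply_inr]
        simp
      · rw [hMexp, Matrix.fromBlocks_apply₂₁, Matrix.fromCols_apply_inr,
          Matrix.fromCols_apply_inr, Matrix.smul_apply, Sig_col G (rowKronId ph) pq hp j]
        simp
    -- construct the perturbations
    obtain ⟨ΔE, hΔE⟩ : ∃ X : Matrix (Fin n) (Fin n) ℝ, X = Matrix.of fun i j =>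
        α₁⁻¹ * (dwt (sortIdx i j))⁻¹ * zs (Sum.inl (Sum.inl (sortIdx i j))) := ⟨_, rfl⟩
    obtain ⟨ΔF, hΔF⟩ : ∃ X : Matrix (Fin m) (Fin n) ℝ, X = Matrix.of fun i j =>
        α₂⁻¹ * zs (Sum.inl (Sum.inr (Sum.inl (j, i)))) := ⟨_, rfl⟩
    obtain ⟨ΔG, hΔG⟩ : ∃ X : Matrix (Fin m) (Fin m) ℝ, X = Matrix.of fun i j =>
        α₃⁻¹ * zs (Sum.inl (Sum.inr (Sum.inr (j, i)))) := ⟨_, rfl⟩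
    obtain ⟨Δq, hΔq⟩ : ∃ x : Fin n → ℝ, x = fun i =>
        β₁⁻¹ * zs (Sum.inr (Sum.inl i)) := ⟨_, rfl⟩
    obtain ⟨Δr, hΔr⟩ : ∃ x : Fin m → ℝ, x = fun i =>
        β₂⁻¹ * zs (Sum.inr (Sum.inr i)) := ⟨_, rfl⟩
    have hsym : ΔE.IsSymm := by
      rw [Matrix.IsSymm]
      ext i j
      rw [Matrix.transpose_apply, hΔE, Matrix.of_apply, Matrix.of_apply, sortIdx_symm]
    have hcompatE : ∀ i j, E i j = 0 → ΔE i j = 0 := by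
      intro i j h
      have h' : E (sortIdx i j).1.1 (sortIdx i j).1.2 = 0 := by
        unfold sortIdx
        split_ifs with hij
        · exact h
        · rw [hE.apply]; exact h
      rw [hΔE, Matrix.of_apply, f1 _ h', mul_zero]
    have hcompatF : ∀ i j, F i j = 0 → ΔF i j = 0 := by
      intro i j h
      rw [hΔF, Matrix.of_apply, f2 (j, i) h, mul_zero]
    have hcompatG : ∀ i j, G i j = 0 → ΔG i j = 0 := by
      intro i j h
      rw [hΔG, Matrix.of_apply, f3 (j, i) h, mul_zero]
    have hhadE : ΔE.hadamard (theta E) = ΔE := by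
      ext i j
      rw [Matrix.hadamard_apply, theta, Matrix.of_apply]
      by_cases h : E i j = 0
      · rw [if_pos h, mul_zero, hcompatE i j h]
      · rw [if_neg h, mul_one]
    have hhadF : ΔF.hadamard (theta F) = ΔF := by
      ext i j
      rw [Matrix.hadamard_apply, theta, Matrix.of_apply]
      by_cases h : F i j = 0
      · rw [if_pos h, mul_zero, hcompatF i j h]
      · rw [if_neg h, mul_one]
    have hhadG : ΔG.hadamard (theta G) = ΔG := by
      ext i j
      rw [Matrix.hadamard_apply, theta, Matrix.of_apply]
      by_cases h : G i j = 0
      · rw [if_pos h, mul_zero, hcompatG i j h]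
      · rw [if_neg h, mul_one]
    -- zs is the encoding of the constructed perturbations
    have henc : encode α₁ α₂ α₃ β₁ β₂ ΔE ΔF ΔG Δq Δr = zs := by
      funext k
      rcases k with (p | (pq | pq)) | (i | i)
      · simp only [encode, Sum.elim_inl, Pi.smul_apply, smul_eq_mul, vecS, hΔE, Matrix.of_apply]
        rw [sortIdx_self]
        have hd := dwt_ne_zero p
        field_simp
        try ring
      · simp only [encode, Sum.elim_inl, Sum.elim_inr, Pi.smul_apply, smul_eq_mul, vecM,
          hΔF, Matrix.of_apply]
        rw [show ((pq.1, pq.2) : Fin n × Fin m) = pq from rfl]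
        field_simp
        try ring
      · simp only [encode, Sum.elim_inl, Sum.elim_inr, Pi.smul_apply, smul_eq_mul, vecM,
          hΔG, Matrix.of_apply]
        rw [show ((pq.1, pq.2) : Fin m × Fin m) = pq from rfl]
        field_simp
        try ring
      · simp only [encode, Sum.elim_inr, Sum.elim_inl, Pi.smul_apply, smul_eq_mul, hΔq]
        field_simp
      · simp only [encode, Sum.elim_inr, Pi.smul_apply, smul_eq_mul, hΔr]
        field_simp
    have hMzs : M *ᵥ zs = w := by
      rw [hzsdef, Matrix.mulVec_mulVec, ← Matrix.mul_assoc,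
        Matrix.mul_nonsing_inv _ ((Matrix.isUnit_iff_isUnit_det _).mp hMMT), Matrix.one_mulVec]
    have hMenc : M *ᵥ encode α₁ α₂ α₃ β₁ β₂ ΔE ΔF ΔG Δq Δr =
        Sum.elim (ΔE *ᵥ uh + ΔFᵀ *ᵥ ph - Δq) (ΔF *ᵥ uh + ΔG *ᵥ ph - Δr) := by
      rw [hMexp]
      exact encode_mulVec E F G uh ph α₁ α₂ α₃ β₁ β₂ hα₁.ne' hα₂.ne' hα₃.ne' hβ₁.ne' hβ₂.ne'
        ΔE ΔF ΔG Δq Δr hsym hcompatE hcompatF hcompatG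
    have hconstr : Sum.elim (ΔE *ᵥ uh + ΔFᵀ *ᵥ ph - Δq) (ΔF *ᵥ uh + ΔG *ᵥ ph - Δr) =
        Sum.elim Q R := by
      rw [← hMenc, henc, hMzs, hwdef]
    have hc1 : ∀ i, (ΔE *ᵥ uh) i + (ΔFᵀ *ᵥ ph) i - Δq i = Q i := by
      intro i
      have := congrFun hconstr (Sum.inl i)
      simpa using this
    have hc2 : ∀ i, (ΔF *ᵥ uh) i + (ΔG *ᵥ ph) i - Δr i = R i := by
      intro i
      have := congrFun hconstr (Sum.inr i)
      simpa using this
    refine ⟨ΔE, ΔF, ΔG, Δq, Δr, hsym, ?_, ?_, ?_⟩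
    · rw [hhadE, hhadF]
      funext i
      have h1 := hc1 i
      rw [hQdef] at h1
      simp only [Pi.add_apply, Pi.sub_apply, Matrix.add_mulVec, Matrix.transpose_add,
        Matrix.add_mulVec] at h1 ⊢
      linarith
    · rw [hhadF, hhadG]
      funext i
      have h1 := hc2 i
      rw [hRdef] at h1
      simp only [Pi.add_apply, Pi.sub_apply, Matrix.add_mulVec] at h1 ⊢
      linarith
    · rw [hhadE, hhadF, hhadG, ← encode_eunorm α₁ α₂ α₃ β₁ β₂ hα₁ hα₂ hα₃ hβ₁ hβ₂
        ΔE ΔF ΔG Δq Δr hsym, henc]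
  -- Lower bound
  · rintro t ⟨ΔE, ΔF, ΔG, Δq, Δr, hsymE, hc1, hc2, ht⟩
    set A := ΔE.hadamard (theta E) with hA
    set B := ΔF.hadamard (theta F) with hB
    set C := ΔG.hadamard (theta G) with hC
    have hAs : A.IsSymm := by
      rw [Matrix.IsSymm]
      ext i j
      rw [Matrix.transpose_apply, hA, Matrix.hadamard_apply, Matrix.hadamard_apply,
        hsymE.apply i j, theta, Matrix.of_apply, Matrix.of_apply, hE.apply i j]
    have hAE : ∀ i j, E i j = 0 → A i j = 0 := by
      intro i j h
      rw [hA, Matrix.hadamard_apply, theta, Matrix.of_apply, if_pos h, mul_zero]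
    have hBF : ∀ i j, F i j = 0 → B i j = 0 := by
      intro i j h
      rw [hB, Matrix.hadamard_apply, theta, Matrix.of_apply, if_pos h, mul_zero]
    have hCG : ∀ i j, G i j = 0 → C i j = 0 := by
      intro i j h
      rw [hC, Matrix.hadamard_apply, theta, Matrix.of_apply, if_pos h, mul_zero]
    have hMz : M *ᵥ encode α₁ α₂ α₃ β₁ β₂ A B C Δq Δr = w := by
      have hem := encode_mulVec E F G uh ph α₁ α₂ α₃ β₁ β₂ hα₁.ne' hα₂.ne' hα₃.ne' hβ₁.ne'
        hβ₂.ne' A B C Δq Δr hAs hAE hBF hCG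
      simp only [cs_mul] at hem
      rw [hMexp, hem, hwdef]
      funext k
      rcases k with i | j
      · have h1 := congrFun hc1 i
        rw [hQdef]
        simp only [Pi.add_apply, Pi.sub_apply, Matrix.add_mulVec, Matrix.transpose_add,
          Sum.elim_inl] at h1 ⊢
        linarith
      · have h1 := congrFun hc2 j
        rw [hRdef]
        simp only [Pi.add_apply, Pi.sub_apply, Matrix.add_mulVec, Sum.elim_inr] at h1 ⊢
        linarith
    have ht' : t = eunorm (encode α₁ α₂ α₃ β₁ β₂ A B C Δq Δr) := by
      rw [ht, ← encode_eunorm α₁ α₂ α₃ β₁ β₂ hα₁ hα₂ hα₃ hβ₁ hβ₂ A B C Δq Δr hAs]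
    rw [ht']
    exact least_squares M hMMT w _ hMz


end GSPPBE
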